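/- On the solid torus with coordinates (r,μ,λ), for constants A, B, C, D with B > 0, C > 0, the pair α⁺ = (1/(B+Ar²))(r² dμ + dλ) and α⁻ = C dμ + D dλ − α⁺ is a well-behaved contact pair: α⁺ is a positive contact form on the whole solid torus with Reeb field R_{α⁺} = A ∂_μ + B ∂_λ, α⁻ is a negative contact form on the complement of the core circle provided AC + BD > 1, and α⁺ + α⁻ = C dμ + D dλ is closed. -/

import Mathlib

noncomputable section

/-- ℝ³, the local model of a 3-manifold. -/
abbrev E3 : Type := Fin 3 → ℝ

/-- Pairing of a covector (given by its coefficients) with a vector. -/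
def dot3 (a v : E3) : ℝ := ∑ i, a i * v i

/-- The exterior derivative of a 1-form `a` (given by coefficient functions),
evaluated on a pair of (constant) vectors: dα(u,v) = ∂_u(α(v)) − ∂_v(α(u)). -/
noncomputable def oneD (a : E3 → E3) (x u v : E3) : ℝ :=
  fderiv ℝ (fun y => dot3 (a y) v) x u - fderiv ℝ (fun y => dot3 (a y) u) x v

/-- Standard basis vectors. -/
def e3 (i : Fin 3) : E3 := Pi.single i 1

/-- The coefficient of α ∧ dα against the standard volume dx⁰∧dx¹∧dx²;
a 1-form is positive contact iff this is everywhere positive. -/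
noncomputable def contactVol (a : E3 → E3) (x : E3) : ℝ :=
  dot3 (a x) (e3 0) * oneD a x (e3 1) (e3 2)
    - dot3 (a x) (e3 1) * oneD a x (e3 0) (e3 2)
    + dot3 (a x) (e3 2) * oneD a x (e3 0) (e3 1)

/-- s = r² = x² + y² on the solid torus in Cartesian coordinates (x,y,λ). -/
def sq2 (x : E3) : ℝ := (x 0) ^ 2 + (x 1) ^ 2

/-- α⁺ = (1/(B + Ar²))(r² dμ + dλ); note r²dμ = x dy − y dx is smooth across r=0. -/
noncomputable def aP11 (A B : ℝ) (x : E3) : E3 :=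
  (B + A * sq2 x)⁻¹ • ![-(x 1), x 0, 1]

/-- α⁰ = C dμ + D dλ, defined away from the core circle r = 0. -/
noncomputable def a011 (C D : ℝ) (x : E3) : E3 :=
  ![-(x 1) * C / sq2 x, x 0 * C / sq2 x, D]

/-- α⁻ = C dμ + D dλ − α⁺. -/
noncomputable def aM11 (A B C D : ℝ) (x : E3) : E3 := a011 C D x - aP11 A B x

/-- R = A ∂_μ + B ∂_λ, with ∂_μ = x∂_y − y∂_x. -/
def R11 (A B : ℝ) (x : E3) : E3 := ![-(A * x 1), A * x 0, B]

/- ## Auxiliary lemmas -/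

lemma dotP (A B : ℝ) (x v : E3) :
    dot3 (aP11 A B x) v = (B + A * sq2 x)⁻¹ * (-(x 1) * v 0 + x 0 * v 1 + v 2) := by
  simp [dot3, aP11, Fin.sum_univ_three]; ring

lemma dot0 (C D : ℝ) (x v : E3) :
    dot3 (a011 C D x) v = C * (-(x 1) * v 0 + x 0 * v 1) * (sq2 x)⁻¹ + D * v 2 := by
  simp [dot3, a011, Fin.sum_univ_three, div_eq_mul_inv]; ring

lemma dotM (A B C D : ℝ) (x v : E3) :
    dot3 (aM11 A B C D x) v = dot3 (a011 C D x) v - dot3 (aP11 A B x) v := by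
  simp [aM11, dot3, Fin.sum_univ_three]; ring

lemma fdP (A B : ℝ) (x u v : E3) (hg : B + A * sq2 x ≠ 0) :
    fderiv ℝ (fun y => dot3 (aP11 A B y) v) x u =
      -(((B + A * sq2 x)^2)⁻¹ * (A * (2 * x 0 * u 0 + 2 * x 1 * u 1)))
          * (-(x 1) * v 0 + x 0 * v 1 + v 2)
      + (B + A * sq2 x)⁻¹ * (-(u 1) * v 0 + u 0 * v 1) := by
  have h0 : HasFDerivAt (fun y : E3 => y 0)
      (ContinuousLinearMap.proj (R := ℝ) (φ := fun _ : Fin 3 => ℝ) 0) x :=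
    hasFDerivAt_apply 0 x
  have h1 : HasFDerivAt (fun y : E3 => y 1)
      (ContinuousLinearMap.proj (R := ℝ) (φ := fun _ : Fin 3 => ℝ) 1) x :=
    hasFDerivAt_apply 1 x
  have hgd : HasFDerivAt (fun y : E3 => B + A * (y 0 * y 0 + y 1 * y 1)) _ x :=
    (((h0.mul h0).add (h1.mul h1)).const_mul A).const_add B
  have hne : B + A * (x 0 * x 0 + x 1 * x 1) ≠ 0 := by
    simpa [sq2, pow_two] using hg
  have hinv : HasFDerivAt (fun y : E3 => (B + A * (y 0 * y 0 + y 1 * y 1))⁻¹) _ x :=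
    (hasFDerivAt_inv hne).comp x hgd
  have hp : HasFDerivAt (fun y : E3 => -(y 1) * v 0 + y 0 * v 1 + v 2) _ x :=
    ((h1.neg.mul_const (v 0)).add (h0.mul_const (v 1))).add_const (v 2)
  have hmul := hinv.mul hp
  simp only [Pi.mul_def] at hmul
  have heq : (fun y => dot3 (aP11 A B y) v)
      = fun y : E3 => ((B + A * (y 0 * y 0 + y 1 * y 1))⁻¹
          * (-(y 1) * v 0 + y 0 * v 1 + v 2)) := by
    funext y; rw [dotP]; simp only [sq2]; ring_nf
  rw [heq, hmul.fderiv]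
  simp [sq2, pow_two]
  ring

lemma fd0 (C D : ℝ) (x u v : E3) (hs : sq2 x ≠ 0) :
    fderiv ℝ (fun y => dot3 (a011 C D y) v) x u =
      -(((sq2 x)^2)⁻¹ * (2 * x 0 * u 0 + 2 * x 1 * u 1))
          * (C * (-(x 1) * v 0 + x 0 * v 1))
      + (sq2 x)⁻¹ * (C * (-(u 1) * v 0 + u 0 * v 1)) := by
  have h0 : HasFDerivAt (fun y : E3 => y 0)
      (ContinuousLinearMap.proj (R := ℝ) (φ := fun _ : Fin 3 => ℝ) 0) x :=
    hasFDerivAt_apply 0 x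
  have h1 : HasFDerivAt (fun y : E3 => y 1)
      (ContinuousLinearMap.proj (R := ℝ) (φ := fun _ : Fin 3 => ℝ) 1) x :=
    hasFDerivAt_apply 1 x
  have hsd : HasFDerivAt (fun y : E3 => y 0 * y 0 + y 1 * y 1) _ x :=
    (h0.mul h0).add (h1.mul h1)
  have hne : x 0 * x 0 + x 1 * x 1 ≠ 0 := by
    simpa [sq2, pow_two] using hs
  have hinv : HasFDerivAt (fun y : E3 => (y 0 * y 0 + y 1 * y 1)⁻¹) _ x :=
    (hasFDerivAt_inv hne).comp x hsd
  have hq : HasFDerivAt (fun y : E3 => C * (-(y 1) * v 0 + y 0 * v 1)) _ x :=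
    ((h1.neg.mul_const (v 0)).add (h0.mul_const (v 1))).const_mul C
  have hmul := (hq.mul hinv).add_const (D * v 2)
  simp only [Pi.mul_def] at hmul
  have heq : (fun y => dot3 (a011 C D y) v)
      = fun y : E3 => (C * (-(y 1) * v 0 + y 0 * v 1) * (y 0 * y 0 + y 1 * y 1)⁻¹
          + D * v 2) := by
    funext y; rw [dot0]; simp only [sq2]; ring_nf
  rw [heq, hmul.fderiv]
  simp [sq2, pow_two]
  ring

lemma fdM (A B C D : ℝ) (x u v : E3) (hs : sq2 x ≠ 0) (hg : B + A * sq2 x ≠ 0) :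
    fderiv ℝ (fun y => dot3 (aM11 A B C D y) v) x u =
      fderiv ℝ (fun y => dot3 (a011 C D y) v) x u
        - fderiv ℝ (fun y => dot3 (aP11 A B y) v) x u := by
  have h0 : HasFDerivAt (fun y : E3 => y 0)
      (ContinuousLinearMap.proj (R := ℝ) (φ := fun _ : Fin 3 => ℝ) 0) x :=
    hasFDerivAt_apply 0 x
  have h1 : HasFDerivAt (fun y : E3 => y 1)
      (ContinuousLinearMap.proj (R := ℝ) (φ := fun _ : Fin 3 => ℝ) 1) x :=
    hasFDerivAt_apply 1 x
  -- derivative of the a011 piece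
  have hsd : HasFDerivAt (fun y : E3 => y 0 * y 0 + y 1 * y 1) _ x :=
    (h0.mul h0).add (h1.mul h1)
  have hsne : x 0 * x 0 + x 1 * x 1 ≠ 0 := by
    simpa [sq2, pow_two] using hs
  have hsinv : HasFDerivAt (fun y : E3 => (y 0 * y 0 + y 1 * y 1)⁻¹) _ x :=
    (hasFDerivAt_inv hsne).comp x hsd
  have hq : HasFDerivAt (fun y : E3 => C * (-(y 1) * v 0 + y 0 * v 1)) _ x :=
    ((h1.neg.mul_const (v 0)).add (h0.mul_const (v 1))).const_mul C
  have hmul0 := (hq.mul hsinv).add_const (D * v 2)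
  simp only [Pi.mul_def] at hmul0
  have heq0 : (fun y => dot3 (a011 C D y) v)
      = fun y : E3 => (C * (-(y 1) * v 0 + y 0 * v 1) * (y 0 * y 0 + y 1 * y 1)⁻¹
          + D * v 2) := by
    funext y; rw [dot0]; simp only [sq2]; ring_nf
  -- derivative of the aP11 piece
  have hgd : HasFDerivAt (fun y : E3 => B + A * (y 0 * y 0 + y 1 * y 1)) _ x :=
    (((h0.mul h0).add (h1.mul h1)).const_mul A).const_add B
  have hgne : B + A * (x 0 * x 0 + x 1 * x 1) ≠ 0 := by
    simpa [sq2, pow_two] using hg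
  have hginv : HasFDerivAt (fun y : E3 => (B + A * (y 0 * y 0 + y 1 * y 1))⁻¹) _ x :=
    (hasFDerivAt_inv hgne).comp x hgd
  have hp : HasFDerivAt (fun y : E3 => -(y 1) * v 0 + y 0 * v 1 + v 2) _ x :=
    ((h1.neg.mul_const (v 0)).add (h0.mul_const (v 1))).add_const (v 2)
  have hmulP := hginv.mul hp
  simp only [Pi.mul_def] at hmulP
  have hsubM := hmul0.sub hmulP
  simp only [Pi.sub_def] at hsubM
  have heqP : (fun y => dot3 (aP11 A B y) v)
      = fun y : E3 => ((B + A * (y 0 * y 0 + y 1 * y 1))⁻¹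
          * (-(y 1) * v 0 + y 0 * v 1 + v 2)) := by
    funext y; rw [dotP]; simp only [sq2]; ring_nf
  have heqM : (fun y => dot3 (aM11 A B C D y) v)
      = fun y : E3 => ((C * (-(y 1) * v 0 + y 0 * v 1) * (y 0 * y 0 + y 1 * y 1)⁻¹
          + D * v 2)
        - ((B + A * (y 0 * y 0 + y 1 * y 1))⁻¹ * (-(y 1) * v 0 + y 0 * v 1 + v 2))) := by
    funext y; rw [dotM, dot0, dotP]; simp only [sq2]; ring_nf
  rw [heqM, hsubM.fderiv, heq0, hmul0.fderiv, heqP, hmulP.fderiv]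
  simp


lemma oneDP (A B : ℝ) (x u v : E3) (hg : B + A * sq2 x ≠ 0) :
    oneD (aP11 A B) x u v =
      -(((B + A * sq2 x)^2)⁻¹ * A) *
        ((2 * x 0 * u 0 + 2 * x 1 * u 1) * (-(x 1) * v 0 + x 0 * v 1 + v 2)
          - (2 * x 0 * v 0 + 2 * x 1 * v 1) * (-(x 1) * u 0 + x 0 * u 1 + u 2))
      + (B + A * sq2 x)⁻¹ * (2 * (u 0 * v 1 - u 1 * v 0)) := by
  unfold oneD
  rw [fdP A B x u v hg, fdP A B x v u hg]
  ring

lemma oneD0 (C D : ℝ) (x u v : E3) (hs : sq2 x ≠ 0) :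
    oneD (a011 C D) x u v = 0 := by
  have hs' : x 0 ^ 2 + x 1 ^ 2 ≠ 0 := by simpa [sq2] using hs
  unfold oneD
  rw [fd0 C D x u v hs, fd0 C D x v u hs]
  simp only [sq2]
  field_simp
  ring

lemma oneDM (A B C D : ℝ) (x u v : E3) (hs : sq2 x ≠ 0) (hg : B + A * sq2 x ≠ 0) :
    oneD (aM11 A B C D) x u v = - oneD (aP11 A B) x u v := by
  have h := oneD0 C D x u v hs
  unfold oneD at h ⊢
  rw [fdM A B C D x u v hs hg, fdM A B C D x v u hs hg]
  linarith


/-- for B > 0, C > 0 (and B + Ar² > 0 so that α⁺ is defined on the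
solid torus), the pair α⁺ = (1/(B+Ar²))(r²dμ + dλ), α⁻ = Cdμ + Ddλ − α⁺ is a
well-behaved contact pair: α⁺ is a positive contact form on the whole solid torus
with Reeb field A∂_μ + B∂_λ; α⁻ is a negative contact form off the core circle
provided AC + BD > 1; and α⁺ + α⁻ = Cdμ + Ddλ is closed. -/
theorem statement11 (A B C D : ℝ) (hB : 0 < B) (hC : 0 < C)
    (hdef : ∀ s : ℝ, 0 ≤ s → s ≤ 1 → 0 < B + A * s) :
    (∀ x : E3, sq2 x ≤ 1 → 0 < contactVol (aP11 A B) x) ∧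
    (∀ x : E3, sq2 x ≤ 1 →
      dot3 (aP11 A B x) (R11 A B x) = 1 ∧
      ∀ v : E3, oneD (aP11 A B) x (R11 A B x) v = 0) ∧
    (1 < A * C + B * D →
      ∀ x : E3, sq2 x ≤ 1 → 0 < sq2 x → contactVol (aM11 A B C D) x < 0) ∧
    (∀ x : E3, 0 < sq2 x → ∀ u v : E3, oneD (a011 C D) x u v = 0) := by
  refine ⟨?_, ?_, ?_, ?_⟩
  · intro x hx
    have hs0 : (0:ℝ) ≤ sq2 x := by simp only [sq2]; positivity
    have hg : 0 < B + A * sq2 x := hdef _ hs0 hx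
    have hgne := ne_of_gt hg
    have hgne' : B + A * (x 0 ^ 2 + x 1 ^ 2) ≠ 0 := by simpa [sq2] using hgne
    have key : contactVol (aP11 A B) x = 2 * ((B + A * (x 0 ^ 2 + x 1 ^ 2))^2)⁻¹ := by
      unfold contactVol
      rw [dotP, dotP, dotP,
        oneDP A B x (e3 1) (e3 2) hgne, oneDP A B x (e3 0) (e3 2) hgne,
        oneDP A B x (e3 0) (e3 1) hgne]
      simp [e3, Pi.single_apply, sq2]
      field_simp
      ring
    rw [key]; positivity
  · intro x hx
    have hs0 : (0:ℝ) ≤ sq2 x := by simp only [sq2]; positivity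
    have hg : 0 < B + A * sq2 x := hdef _ hs0 hx
    have hgne := ne_of_gt hg
    have hgne' : B + A * (x 0 ^ 2 + x 1 ^ 2) ≠ 0 := by simpa [sq2] using hgne
    constructor
    · rw [dotP]
      have : -(x 1) * (R11 A B x 0) + x 0 * (R11 A B x 1) + R11 A B x 2
          = B + A * sq2 x := by
        simp [R11, sq2]; ring
      rw [this, inv_mul_cancel₀ hgne]
    · intro v
      rw [oneDP A B x (R11 A B x) v hgne]
      simp [R11, sq2]
      field_simp
      ring
  · intro hACBD x hx hspos
    have hs0 : (0:ℝ) ≤ sq2 x := le_of_lt hspos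
    have hg : 0 < B + A * sq2 x := hdef _ hs0 hx
    have hgne := ne_of_gt hg
    have hsne := ne_of_gt hspos
    have hgne' : B + A * (x 0 ^ 2 + x 1 ^ 2) ≠ 0 := by simpa [sq2] using hgne
    have hsne' : x 0 ^ 2 + x 1 ^ 2 ≠ 0 := by simpa [sq2] using hsne
    have key : contactVol (aM11 A B C D) x
        = (-2) * (A * C + B * D - 1) * ((B + A * (x 0 ^ 2 + x 1 ^ 2))^2)⁻¹ := by
      unfold contactVol
      rw [dotM, dotM, dotM, dot0, dot0, dot0, dotP, dotP, dotP,
        oneDM A B C D x (e3 1) (e3 2) hsne hgne, oneDM A B C D x (e3 0) (e3 2) hsne hgne,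
        oneDM A B C D x (e3 0) (e3 1) hsne hgne,
        oneDP A B x (e3 1) (e3 2) hgne, oneDP A B x (e3 0) (e3 2) hgne,
        oneDP A B x (e3 0) (e3 1) hgne]
      simp [e3, Pi.single_apply, sq2]
      have hgne'' : B + (x 0 ^ 2 + x 1 ^ 2) * A ≠ 0 := by rw [mul_comm]; exact hgne'
      field_simp
      ring
    rw [key]
    have h2 : 0 < ((B + A * (x 0 ^ 2 + x 1 ^ 2))^2)⁻¹ := by
      have : 0 < B + A * (x 0 ^ 2 + x 1 ^ 2) := by
        have := hg; simpa [sq2] using this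
      positivity
    nlinarith
  · intro x hspos u v
    exact oneD0 C D x u v (ne_of_gt hspos)
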